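/- Let t ≥ 2 and k ≥ 1 be integers. The real number H_k(1/2)/H_k(1/2^{t^k}) is irrational. -/

import Mathlib

open Polynomial

/-- The (Type 1) Stern polynomials `a_t(n; z) ∈ ℤ[z]` of Dilcher and Eriksen:
`a_t(0;z) = 0`, `a_t(1;z) = 1`, and for `n ≥ 1`,
`a_t(2n;z) = z·a_t(n;z^t)`, `a_t(2n+1;z) = a_t(n+1;z^t) + a_t(n;z^t)`. -/
noncomputable def sternPoly (t : ℕ) : ℕ → Polynomial ℤ
  | 0 => 0
  | 1 => 1
  | n + 2 =>
    if h : (n + 2) % 2 = 0 then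
      X * (sternPoly t ((n + 2) / 2)).comp (X ^ t)
    else
      (sternPoly t ((n + 2) / 2 + 1)).comp (X ^ t) +
        (sternPoly t ((n + 2) / 2)).comp (X ^ t)
decreasing_by all_goals omega

/-- `α_n = (2^{kn} - (-1)^n) / (2^k + 1)`, a nonnegative integer. -/
def sternAlpha (k n : ℕ) : ℕ :=
  (((2 : ℤ) ^ (k * n) - (-1) ^ n) / (2 ^ k + 1)).toNat

/-! ### Auxiliary material -/

lemma stern_even (t n : ℕ) : sternPoly t (2 * n) = X * (sternPoly t n).comp (X ^ t) := by
  match n with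
  | 0 => simp [sternPoly]
  | n + 1 =>
    rw [show 2 * (n+1) = (2*n) + 2 by ring, sternPoly]
    rw [dif_pos (by omega), show (2*n+2)/2 = n + 1 by omega]

lemma stern_odd (t n : ℕ) : sternPoly t (2 * n + 1) =
    (sternPoly t (n + 1)).comp (X ^ t) + (sternPoly t n).comp (X ^ t) := by
  match n with
  | 0 => simp [sternPoly]
  | n + 1 =>
    rw [show 2 * (n+1) + 1 = (2*n+1) + 2 by ring, sternPoly]
    rw [dif_neg (by omega), show (2*n+1+2)/2 = n + 1 by omega]

/-- geometric sum `1 + t + ... + t^(j-1)` -/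
def sS (t j : ℕ) : ℕ := ∑ i ∈ Finset.range j, t ^ i

noncomputable def sB (t : ℕ) : ℕ → Polynomial ℤ
  | 0 => 0
  | j + 1 => (sB t j).comp (X ^ t) + X ^ (t * sS t j)

lemma sS_succ' (t j : ℕ) : sS t (j + 1) = 1 + t * sS t j := by
  unfold sS
  rw [Finset.sum_range_succ']
  simp [Finset.mul_sum, pow_succ, add_comm, mul_comm]

lemma stern_pow_mul (t j m : ℕ) :
    sternPoly t (2 ^ j * m) = X ^ (sS t j) * (sternPoly t m).comp (X ^ t ^ j) := by
  induction j with
  | zero => simp [sS, pow_one]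
  | succ j ih =>
    rw [show 2 ^ (j+1) * m = 2 * (2 ^ j * m) by ring, stern_even, ih, sS_succ']
    simp only [mul_comp, X_pow_comp, comp_assoc, ← pow_mul, pow_add, pow_mul]
    ring_nf

lemma stern_pow_mul_add_one (t j m : ℕ) :
    sternPoly t (2 ^ j * m + 1) = (sternPoly t (m + 1)).comp (X ^ t ^ j)
      + sB t j * (sternPoly t m).comp (X ^ t ^ j) := by
  induction j with
  | zero => simp [sB, pow_one]
  | succ j ih =>
    rw [show 2 ^ (j+1) * m + 1 = 2 * (2 ^ j * m) + 1 by ring, stern_odd, ih, stern_pow_mul]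
    simp only [sB, add_comp, mul_comp, X_pow_comp, comp_assoc, ← pow_mul]
    rw [show t * t ^ j = t ^ (j+1) from (pow_succ' t j).symm]
    ring

lemma stern_pow_mul_sub_one (t j m : ℕ) :
    sternPoly t (2 ^ j * (m + 1) - 1) = (sternPoly t m).comp (X ^ t ^ j)
      + sB t j * (sternPoly t (m + 1)).comp (X ^ t ^ j) := by
  induction j with
  | zero => simp [sB, pow_one]
  | succ j ih =>
    have h1 : 1 ≤ 2 ^ j * (m + 1) := Nat.one_le_iff_ne_zero.2 (by positivity)
    have h2 : 2 ^ (j+1) * (m + 1) = 2 * (2 ^ j * (m + 1)) := by ring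
    rw [show 2 ^ (j+1) * (m+1) - 1 = 2 * (2 ^ j * (m+1) - 1) + 1 by omega, stern_odd,
      show 2 ^ j * (m+1) - 1 + 1 = 2 ^ j * (m + 1) by omega, ih, stern_pow_mul]
    simp only [sB, add_comp, mul_comp, X_pow_comp, comp_assoc, ← pow_mul]
    rw [show t * t ^ j = t ^ (j+1) from (pow_succ' t j).symm]
    ring

lemma alpha_dvd (k n : ℕ) : ((2:ℤ) ^ k + 1) ∣ (2 ^ (k * n) - (-1) ^ n) := by
  have h : (2:ℤ) ^ k ≡ (-1) [ZMOD 2 ^ k + 1] := by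
    rw [Int.modEq_iff_dvd]
    exact ⟨-1, by ring⟩
  have h2 := h.pow n
  rw [pow_mul]
  exact Int.ModEq.dvd (h2.symm)

lemma neg_one_pow_le (n : ℕ) : ((-1:ℤ)) ^ n ≤ 1 := by
  rcases Nat.even_or_odd n with h | h
  · rw [h.neg_one_pow]
  · rw [h.neg_one_pow]; norm_num

lemma alpha_sub_nonneg (k n : ℕ) : (0:ℤ) ≤ 2 ^ (k * n) - (-1) ^ n := by
  have h1 : (1:ℤ) ≤ 2 ^ (k * n) := one_le_pow₀ (by norm_num)
  have := neg_one_pow_le n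
  omega

lemma alpha_mul (k n : ℕ) :
    ((2:ℤ) ^ k + 1) * (sternAlpha k n : ℤ) = 2 ^ (k * n) - (-1) ^ n := by
  have hd := alpha_dvd k n
  have hpos := alpha_sub_nonneg k n
  have hk : (0:ℤ) < 2 ^ k + 1 := by positivity
  unfold sternAlpha
  rw [Int.toNat_of_nonneg (Int.ediv_nonneg hpos hk.le)]
  exact Int.mul_ediv_cancel' hd

lemma alpha_zero (k : ℕ) : sternAlpha k 0 = 0 := by simp [sternAlpha]

lemma alpha_one (k : ℕ) : sternAlpha k 1 = 1 := by
  have h := alpha_mul k 1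
  have hk : (0:ℤ) < 2 ^ k + 1 := by positivity
  have : ((sternAlpha k 1 : ℤ)) = 1 := by
    rw [mul_one k] at h
    nlinarith [h]
  exact_mod_cast this

lemma alpha_succ_even (k n : ℕ) (hn : Even n) :
    sternAlpha k (n + 1) = 2 ^ k * sternAlpha k n + 1 := by
  have h1 := alpha_mul k n
  have h2 := alpha_mul k (n + 1)
  rw [hn.neg_one_pow] at h1
  rw [(hn.add_one).neg_one_pow] at h2
  have hp : (2:ℤ) ^ (k * (n+1)) = 2 ^ k * 2 ^ (k * n) := by
    rw [← pow_add]; ring_nf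
  have hk : (0:ℤ) < 2 ^ k + 1 := by positivity
  have : ((sternAlpha k (n+1) : ℤ)) = 2 ^ k * sternAlpha k n + 1 := by
    nlinarith [h1, h2, hp]
  exact_mod_cast this

lemma alpha_succ_odd (k n : ℕ) (hn : Odd n) :
    sternAlpha k (n + 1) + 1 = 2 ^ k * sternAlpha k n := by
  have h1 := alpha_mul k n
  have h2 := alpha_mul k (n + 1)
  rw [hn.neg_one_pow] at h1
  rw [(Even.neg_one_pow (by rcases hn with ⟨m,hm⟩; exact ⟨m+1, by omega⟩)) ] at h2
  have hp : (2:ℤ) ^ (k * (n+1)) = 2 ^ k * 2 ^ (k * n) := by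
    rw [← pow_add]; ring_nf
  have hk : (0:ℤ) < 2 ^ k + 1 := by positivity
  have : ((sternAlpha k (n+1) : ℤ)) + 1 = 2 ^ k * sternAlpha k n := by
    nlinarith [h1, h2, hp]
  exact_mod_cast this

lemma alpha_pos (k n : ℕ) (hk : 1 ≤ k) (hn : 1 ≤ n) : 1 ≤ sternAlpha k n := by
  induction n with
  | zero => omega
  | succ n ih =>
    rcases Nat.even_or_odd n with h | h
    · rw [alpha_succ_even k n h]; omega
    · have h2 := alpha_succ_odd k n h
      have h3 : 1 ≤ sternAlpha k n := ih (by rcases h with ⟨m,hm⟩; omega)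
      have h4 : 2 ≤ 2 ^ k := by
        calc 2 = 2^1 := (pow_one 2).symm
        _ ≤ 2 ^ k := Nat.pow_le_pow_right (by norm_num) hk
      nlinarith [h2, h3, h4]

lemma alpha_odd (k n : ℕ) (hk : 1 ≤ k) (hn : 1 ≤ n) : Odd (sternAlpha k n) := by
  have he : Even (2 ^ k) := by
    rcases k with _ | k
    · omega
    · exact ⟨2^k, by rw [pow_succ]; ring⟩
  induction n with
  | zero => omega
  | succ n ih =>
    rcases Nat.eq_zero_or_pos n with h0 | h0
    · subst h0; rw [alpha_one]; exact odd_one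
    · rcases Nat.even_or_odd n with h | h
      · rw [alpha_succ_even k n h]
        rcases he with ⟨m, hm⟩
        exact ⟨m * sternAlpha k n, by rw [hm]; ring⟩
      · have h2 := alpha_succ_odd k n h
        rcases he with ⟨m, hm⟩
        have hp := alpha_pos k n hk h0
        refine ⟨m * sternAlpha k n - 1, ?_⟩
        have : 2 ^ k * sternAlpha k n = 2 * (m * sternAlpha k n) := by rw [hm]; ring
        omega

lemma comp_comp_aux (Q : Polynomial ℤ) (s a b : ℕ) :
    (X ^ s * Q.comp (X ^ a)).comp (X ^ b) = X ^ (b * s) * Q.comp (X ^ (a * b)) := by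
  rw [mul_comp, X_pow_comp, comp_assoc, X_pow_comp, ← pow_mul, ← pow_mul, mul_comm b s,
    mul_comm b a]

lemma stern_key (t k n : ℕ) (hk : 1 ≤ k) :
    sternPoly t (sternAlpha k (n + 2)) =
      sB t k * (sternPoly t (sternAlpha k (n + 1))).comp (X ^ t ^ k)
      + X ^ (t ^ k * sS t k) * (sternPoly t (sternAlpha k n)).comp (X ^ (t ^ k * t ^ k)) := by
  rcases Nat.even_or_odd n with h | h
  · have h1 : sternAlpha k (n + 2) + 1 = 2 ^ k * sternAlpha k (n + 1) :=
      alpha_succ_odd k (n+1) (h.add_one)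
    have h2 : sternAlpha k (n + 1) = 2 ^ k * sternAlpha k n + 1 :=
      alpha_succ_even k n h
    have hpos : 1 ≤ sternAlpha k (n + 1) := alpha_pos k (n+1) hk (by omega)
    have ha : sternAlpha k (n+1) - 1 + 1 = sternAlpha k (n+1) := by omega
    have h3 : sternAlpha k (n + 2) = 2 ^ k * (sternAlpha k (n+1) - 1 + 1) - 1 := by
      rw [ha]; omega
    rw [h3, stern_pow_mul_sub_one,
      show sternAlpha k (n+1) - 1 + 1 = sternAlpha k (n+1) by omega,
      show sternAlpha k (n+1) - 1 = 2 ^ k * sternAlpha k n by omega,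
      stern_pow_mul, comp_comp_aux, mul_comm (t ^ k) (sS t k)]
    ring
  · have h1 : sternAlpha k (n + 2) = 2 ^ k * sternAlpha k (n + 1) + 1 :=
      alpha_succ_even k (n+1) (Odd.add_one h)
    have h2 : sternAlpha k (n + 1) + 1 = 2 ^ k * sternAlpha k n :=
      alpha_succ_odd k n h
    rw [h1, stern_pow_mul_add_one, h2, stern_pow_mul, comp_comp_aux,
      mul_comm (t ^ k) (sS t k)]
    ring

lemma stern_eval_mono (t : ℕ) (n : ℕ) : ∀ x y : ℝ, 0 ≤ x → x ≤ y →
    0 ≤ aeval x (sternPoly t n) ∧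
      aeval x (sternPoly t n) ≤ aeval y (sternPoly t n) := by
  induction n using Nat.strong_induction_on with
  | _ n ih =>
    intro x y hx hxy
    match n with
    | 0 => rw [sternPoly]; simp
    | 1 => rw [sternPoly]; simp
    | (m + 2) =>
      rcases Nat.even_or_odd (m + 2) with h | h
      · obtain ⟨j, hj⟩ := h
        have hj2 : m + 2 = 2 * j := by omega
        have hjlt : j < m + 2 := by omega
        rw [hj2, stern_even]
        simp only [map_mul, aeval_X, aeval_comp, aeval_X_pow]
        have h1 := ih j hjlt (x ^ t) (y ^ t) (by positivity)
          (pow_le_pow_left₀ hx hxy t)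
        exact ⟨mul_nonneg hx h1.1, mul_le_mul hxy h1.2 h1.1 (le_trans hx hxy)⟩
      · obtain ⟨j, hj⟩ := h
        have hj2 : m + 2 = 2 * j + 1 := by omega
        have hjlt : j < m + 2 := by omega
        have hjlt2 : j + 1 < m + 2 := by omega
        rw [hj2, stern_odd]
        simp only [map_add, aeval_comp, aeval_X_pow]
        have h1 := ih j hjlt (x ^ t) (y ^ t) (by positivity)
          (pow_le_pow_left₀ hx hxy t)
        have h2 := ih (j+1) hjlt2 (x ^ t) (y ^ t) (by positivity)
          (pow_le_pow_left₀ hx hxy t)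
        exact ⟨add_nonneg h2.1 h1.1, add_le_add h2.2 h1.2⟩

lemma stern_eval_zero (t : ℕ) (ht : 1 ≤ t) (n : ℕ) :
    aeval (0:ℝ) (sternPoly t n) = if Odd n then 1 else 0 := by
  induction n using Nat.strong_induction_on with
  | _ n ih =>
    match n with
    | 0 => rw [sternPoly]; simp
    | 1 => rw [sternPoly]; simp
    | (m + 2) =>
      have hz : (0:ℝ) ^ t = 0 := zero_pow (by omega)
      rcases Nat.even_or_odd (m + 2) with h | h
      · obtain ⟨j, hj⟩ := h
        have hj2 : m + 2 = 2 * j := by omega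
        rw [hj2, stern_even]
        simp only [map_mul, aeval_X, aeval_comp, aeval_X_pow]
        rw [if_neg (Nat.not_odd_iff_even.mpr (even_two_mul j))]
        ring
      · obtain ⟨j, hj⟩ := h
        have hj2 : m + 2 = 2 * j + 1 := by omega
        have hjlt : j < m + 2 := by omega
        have hjlt2 : j + 1 < m + 2 := by omega
        rw [hj2, stern_odd]
        simp only [map_add, aeval_comp, aeval_X_pow, hz]
        rw [ih j hjlt, ih (j+1) hjlt2, if_pos (odd_two_mul_add_one j)]
        rcases Nat.even_or_odd j with hj3 | hj3
        · rw [if_neg (Nat.not_odd_iff_even.mpr hj3), if_pos hj3.add_one]; ring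
        · rw [if_pos hj3, if_neg (Nat.not_odd_iff_even.mpr hj3.add_one)]; ring

lemma aeval_half_pow (p : Polynomial ℤ) (s : ℕ) :
    ∃ N : ℤ, (N:ℝ) = 2 ^ (p.natDegree * s) * aeval ((1/2:ℝ) ^ s) p := by
  refine ⟨∑ i ∈ Finset.range (p.natDegree + 1), p.coeff i * 2 ^ (s * (p.natDegree - i)), ?_⟩
  rw [Polynomial.aeval_eq_sum_range, Finset.mul_sum]
  push_cast
  apply Finset.sum_congr rfl
  intro i hi
  have hi2 : i ≤ p.natDegree := by
    simpa [Nat.lt_succ_iff] using hi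
  have h1 : ((1/2:ℝ) ^ s) ^ i = (2 ^ (s * i))⁻¹ := by
    rw [one_div, ← inv_pow, ← pow_mul]
  rw [zsmul_eq_mul, h1]
  rw [show p.natDegree * s = s * (p.natDegree - i) + s * i by
    cases Nat.le.dest hi2 with
    | intro c hc =>
      rw [← hc, show i + c - i = c by omega]; ring_nf, pow_add]
  field_simp

lemma sB_deg_aux (t : ℕ) : ∀ j, (sB t (j+1)).natDegree ≤ t * sS t j := by
  intro j
  induction j with
  | zero => simp [sB, sS]
  | succ j ih =>
    show ((sB t (j+1)).comp (X ^ t) + X ^ (t * sS t (j+1))).natDegree ≤ _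
    refine le_trans (natDegree_add_le _ _) ?_
    rw [max_le_iff]
    constructor
    · refine le_trans (natDegree_comp_le) ?_
      rw [natDegree_X_pow]
      calc (sB t (j+1)).natDegree * t ≤ (t * sS t j) * t := Nat.mul_le_mul_right t ih
        _ ≤ t * sS t (j+1) := by rw [sS_succ' t j]; nlinarith
    · rw [natDegree_X_pow]

lemma sB_deg (t k : ℕ) (hk : 1 ≤ k) : (sB t k).natDegree + 1 ≤ sS t k := by
  rcases k with _ | j
  · omega
  · have h := sB_deg_aux t j
    have h2 := sS_succ' t j
    omega

lemma nat_pow_helper (c : ℕ) : c * (2*c + 3) < 2 ^ (2*c + 2) := by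
  have h : c < 2 ^ c := Nat.lt_two_pow_self
  have h2 : 2 ^ (2*c+2) = 4 * (2^c * 2^c) := by rw [pow_add, two_mul, pow_add]; ring
  nlinarith

/-- The real number `H_k(1/2) / H_k(1/2^{t^k})` is irrational, where `H_k(x)` is the
limit of `a_t(α_n; x)` as `n → ∞` for `|x| < 1`. -/
theorem Hk_half_quotient_irrational (t k : ℕ) (ht : 2 ≤ t) (hk : 1 ≤ k) (H : ℝ → ℝ)
    (hH : ∀ x : ℝ, |x| < 1 →
      Filter.Tendsto (fun n => Polynomial.aeval x (sternPoly t (sternAlpha k n)))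
        Filter.atTop (nhds (H x)))  :
    Irrational (H (1 / 2) / H ((1 / 2) ^ t ^ k)) := by
  set T := t ^ k with hTdef
  have hT2 : 2 ≤ T := by
    calc 2 = 2 ^ 1 := rfl
    _ ≤ t ^ 1 := by simpa using ht
    _ ≤ t ^ k := Nat.pow_le_pow_right (by omega) hk
  set w : ℕ → ℝ := fun m => (1/2:ℝ) ^ (T ^ m) with hwdef
  have hw_pos : ∀ m, 0 < w m := fun m => by positivity
  have hw_half : ∀ m, w m ≤ 1/2 := by
    intro m
    calc w m ≤ (1/2:ℝ) ^ 1 :=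
      pow_le_pow_of_le_one (by norm_num) (by norm_num) (Nat.one_le_pow _ _ (by omega))
    _ = 1/2 := pow_one _
  have hw_abs : ∀ m, |w m| < 1 := by
    intro m
    rw [abs_of_pos (hw_pos m)]
    have := hw_half m
    linarith
  set P : ℕ → Polynomial ℤ := fun n => sternPoly t (sternAlpha k n) with hPdef
  set g : ℕ → ℝ := fun m => H (w m) with hgdef
  have htend : ∀ m, Filter.Tendsto (fun n => aeval (w m) (P n))
      Filter.atTop (nhds (g m)) := fun m => hH (w m) (hw_abs m)
  have hg1 : ∀ m, 1 ≤ g m := by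
    intro m
    refine ge_of_tendsto (htend m) ?_
    filter_upwards [Filter.eventually_ge_atTop 1] with n hn
    have hodd := alpha_odd k n hk hn
    have h0 : aeval (0:ℝ) (P n) = 1 := by
      rw [hPdef]; rw [stern_eval_zero t (by omega), if_pos hodd]
    calc (1:ℝ) = aeval (0:ℝ) (P n) := h0.symm
    _ ≤ aeval (w m) (P n) := (stern_eval_mono t _ 0 (w m) le_rfl (hw_pos m).le).2
  have hg_pos : ∀ m, 0 < g m := fun m => lt_of_lt_of_le one_pos (hg1 m)
  have hw0 : w 0 = 1/2 := by simp [hwdef]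
  have hgM : ∀ m, g m ≤ g 0 := by
    intro m
    refine le_of_tendsto_of_tendsto' (htend m) (htend 0) ?_
    intro n
    refine (stern_eval_mono t _ (w m) (w 0) (hw_pos m).le ?_).2
    rw [hw0]; exact hw_half m
  set M := g 0 with hMdef
  have hM1 : 1 ≤ M := hg1 0
  set γ := T * sS t k with hγdef
  set β := (sB t k).natDegree with hβdef
  have hβγ : 2 * β + 2 ≤ γ := by
    have h1 := sB_deg t k hk
    have h2 : 2 * sS t k ≤ T * sS t k := Nat.mul_le_mul_right _ hT2
    omega
  -- the functional equation
  have hwT : ∀ m, (w m) ^ T = w (m+1) := by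
    intro m
    rw [hwdef]
    simp only
    rw [← pow_mul, pow_succ]
  have hwTT : ∀ m, (w m) ^ (T * T) = w (m+2) := by
    intro m
    rw [hwdef]
    simp only
    rw [← pow_mul]
    congr 1
    rw [pow_succ, pow_succ]
    ring
  have hFE : ∀ m, g m = aeval (w m) (sB t k) * g (m+1) + (w m) ^ γ * g (m+2) := by
    intro m
    have hkey : ∀ n : ℕ, aeval (w m) (P (n+2)) =
        aeval (w m) (sB t k) * aeval (w (m+1)) (P (n+1))
          + (w m) ^ γ * aeval (w (m+2)) (P n) := by
      intro n
      have h := congrArg (aeval (w m)) (stern_key t k n hk)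
      simp only [map_add, map_mul, aeval_comp, aeval_X_pow, hPdef] at h ⊢
      rw [h, hwT m, hwTT m, hγdef]
    have hA : Filter.Tendsto (fun n => aeval (w m) (P (n+2))) Filter.atTop (nhds (g m)) :=
      (htend m).comp (Filter.tendsto_add_atTop_nat 2)
    have h1 := ((htend (m+1)).comp (Filter.tendsto_add_atTop_nat 1)).const_mul
      (aeval (w m) (sB t k))
    have h2 := (htend (m+2)).const_mul ((w m) ^ γ)
    have h3 := h1.add h2
    have hB : Filter.Tendsto (fun n => aeval (w m) (P (n+2))) Filter.atTop
        (nhds (aeval (w m) (sB t k) * g (m+1) + (w m) ^ γ * g (m+2))) := by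
      refine Filter.Tendsto.congr (fun n => (hkey n).symm) h3
    exact tendsto_nhds_unique hA hB
  -- suppose the quotient is rational
  by_contra hirr
  obtain ⟨ρ, hρ⟩ := not_not.mp hirr
  have hw1 : w 1 = (1/2:ℝ) ^ t ^ k := by
    rw [hwdef]
    simp only
    rw [pow_one]
  have hρ' : (ρ:ℝ) = g 0 / g 1 := by
    rw [hρ, hgdef]
    simp only
    rw [hw0, hw1]
  have hρpos : 0 < (ρ:ℝ) := by
    rw [hρ']
    exact div_pos (hg_pos 0) (hg_pos 1)
  have hden_pos : 0 < ρ.den := ρ.pos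
  have hbase : (ρ.den:ℝ) * (g 0 / g 1) = (ρ.num:ℝ) := by
    rw [← hρ', Rat.cast_def]
    field_simp
  -- the key step lemma
  have step : ∀ m (q : ℕ), 0 < q → (∃ N : ℤ, (q:ℝ) * (g m / g (m+1)) = (N:ℝ)) →
      ((2:ℝ) ^ (γ * T ^ m) ≤ (q:ℝ) * 2 ^ (β * T ^ m) * M ∧
       ∃ q' : ℕ, 0 < q' ∧ (∃ N' : ℤ, (q':ℝ) * (g (m+1) / g (m+2)) = (N':ℝ)) ∧
         (q':ℝ) ≤ (q:ℝ) * 2 ^ (β * T ^ m) * M) := by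
    intro m q hq ⟨N, hN⟩
    obtain ⟨Nb, hNb⟩ := aeval_half_pow (sB t k) (T ^ m)
    rw [← hβdef] at hNb
    have hwm : w m = (1/2:ℝ) ^ (T ^ m) := rfl
    rw [← hwm] at hNb
    have hgm1 := hg_pos (m+1)
    have hgm2 := hg_pos (m+2)
    have hratio : (g m / g (m+1)) - aeval (w m) (sB t k)
        = (w m) ^ γ * g (m+2) / g (m+1) := by
      rw [hFE m]
      field_simp
      ring
    set NN : ℤ := 2 ^ (β * T ^ m) * N - q * Nb with hNNdef
    have hNNval : (NN:ℝ) = (q:ℝ) * 2 ^ (β * T ^ m) * ((w m) ^ γ * g (m+2) / g (m+1)) := by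
      rw [← hratio]
      push_cast [hNNdef]
      rw [← hN, hNb]
      ring
    have hNNpos : (0:ℝ) < (NN:ℝ) := by
      rw [hNNval]
      have hqR : (0:ℝ) < (q:ℝ) := by exact_mod_cast hq
      have h2 : (0:ℝ) < (w m) ^ γ * g (m+2) / g (m+1) :=
        div_pos (mul_pos (pow_pos (hw_pos m) γ) hgm2) hgm1
      positivity
    have hNN1 : (1:ℝ) ≤ (NN:ℝ) := by
      have : (0:ℤ) < NN := by exact_mod_cast hNNpos
      exact_mod_cast this
    have hwγ : (w m) ^ γ = ((2:ℝ) ^ (γ * T ^ m))⁻¹ := by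
      rw [hwm, one_div, ← pow_mul, mul_comm (T ^ m) γ, inv_pow]
    have h2γ : (0:ℝ) < (2:ℝ) ^ (γ * T ^ m) := by positivity
    have hub : (NN:ℝ) ≤ (q:ℝ) * 2 ^ (β * T ^ m) * (((2:ℝ) ^ (γ * T ^ m))⁻¹ * M) := by
      rw [hNNval, hwγ]
      have hqR : (0:ℝ) ≤ (q:ℝ) := by positivity
      have hdm : g (m+2) / g (m+1) ≤ M :=
        le_trans (div_le_self hgm2.le (hg1 (m+1))) (hgM (m+2))
      have hB : ((2:ℝ) ^ (γ * T ^ m))⁻¹ * g (m+2) / g (m+1)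
          ≤ ((2:ℝ) ^ (γ * T ^ m))⁻¹ * M := by
        rw [mul_div_assoc]
        exact mul_le_mul_of_nonneg_left hdm (by positivity)
      exact mul_le_mul_of_nonneg_left hB (by positivity)
    constructor
    · have h1 := hNN1.trans hub
      calc (2:ℝ) ^ (γ * T ^ m) = (2:ℝ) ^ (γ * T ^ m) * 1 := (mul_one _).symm
      _ ≤ (2:ℝ) ^ (γ * T ^ m) *
          ((q:ℝ) * 2 ^ (β * T ^ m) * (((2:ℝ) ^ (γ * T ^ m))⁻¹ * M)) :=
        mul_le_mul_of_nonneg_left h1 h2γ.le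
      _ = (q:ℝ) * 2 ^ (β * T ^ m) * M := by field_simp; try ring
    · refine ⟨2 ^ (γ * T ^ m) * NN.toNat, ?_, ⟨(q:ℤ) * 2 ^ (β * T ^ m), ?_⟩, ?_⟩
      · have : 0 < NN.toNat := by
          have : (0:ℤ) < NN := by exact_mod_cast hNNpos
          omega
        positivity
      · have htoNat : ((NN.toNat : ℕ):ℝ) = (NN:ℝ) := by
          have : (0:ℤ) ≤ NN := by exact_mod_cast hNNpos.le
          rw [← Int.cast_natCast, Int.toNat_of_nonneg this]
        push_cast
        rw [htoNat, hNNval, hwγ]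
        field_simp
      · have htoNat : ((NN.toNat : ℕ):ℝ) = (NN:ℝ) := by
          have : (0:ℤ) ≤ NN := by exact_mod_cast hNNpos.le
          rw [← Int.cast_natCast, Int.toNat_of_nonneg this]
        push_cast
        rw [htoNat]
        calc (2:ℝ) ^ (γ * T ^ m) * (NN:ℝ)
            ≤ (2:ℝ) ^ (γ * T ^ m) * ((q:ℝ) * 2 ^ (β * T ^ m) *
              (((2:ℝ) ^ (γ * T ^ m))⁻¹ * M)) := mul_le_mul_of_nonneg_left hub h2γ.le
        _ = (q:ℝ) * 2 ^ (β * T ^ m) * M := by field_simp; try ring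
  -- the main induction
  have main : ∀ m, ∃ q : ℕ, 0 < q ∧ (∃ N : ℤ, (q:ℝ) * (g m / g (m+1)) = (N:ℝ)) ∧
      (q:ℝ) ≤ (ρ.den:ℝ) * M ^ m * 2 ^ (β * T ^ m) := by
    intro m
    induction m with
    | zero =>
      refine ⟨ρ.den, hden_pos, ⟨ρ.num, hbase⟩, ?_⟩
      have h1 : (1:ℝ) ≤ 2 ^ (β * T ^ 0) := one_le_pow₀ (by norm_num)
      calc (ρ.den:ℝ) = (ρ.den:ℝ) * 1 * 1 := by ring
      _ ≤ (ρ.den:ℝ) * M ^ 0 * 2 ^ (β * T ^ 0) := by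
          rw [pow_zero]
          apply mul_le_mul_of_nonneg_left h1 (by positivity)
    | succ m ih =>
      obtain ⟨q, hq, hint, hqb⟩ := ih
      obtain ⟨_, q', hq', hint', hq'b⟩ := step m q hq hint
      refine ⟨q', hq', hint', ?_⟩
      have hMnn : (0:ℝ) ≤ M := by linarith
      have h2b : (2:ℝ) ^ (β * T ^ m) * 2 ^ (β * T ^ m) ≤ 2 ^ (β * T ^ (m+1)) := by
        rw [← pow_add]
        apply pow_le_pow_right₀ (by norm_num)
        have : 2 * T ^ m ≤ T ^ (m+1) := by
          rw [pow_succ, mul_comm (T ^ m) T]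
          exact Nat.mul_le_mul_right _ hT2
        nlinarith
      calc (q':ℝ) ≤ (q:ℝ) * 2 ^ (β * T ^ m) * M := hq'b
      _ ≤ ((ρ.den:ℝ) * M ^ m * 2 ^ (β * T ^ m)) * 2 ^ (β * T ^ m) * M := by
          apply mul_le_mul_of_nonneg_right _ hMnn
          exact mul_le_mul_of_nonneg_right hqb (by positivity)
      _ = (ρ.den:ℝ) * M ^ (m+1) * (2 ^ (β * T ^ m) * 2 ^ (β * T ^ m)) := by ring
      _ ≤ (ρ.den:ℝ) * M ^ (m+1) * 2 ^ (β * T ^ (m+1)) := by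
          apply mul_le_mul_of_nonneg_left h2b (by positivity)
  -- extract the lower bound
  have lower : ∀ m, (4:ℝ) ^ (2 ^ m) ≤ (ρ.den:ℝ) * M ^ (m+1) := by
    intro m
    obtain ⟨q, hq, hint, hqb⟩ := main m
    obtain ⟨hlow, _⟩ := step m q hq hint
    have hMnn : (0:ℝ) ≤ M := by linarith
    have h1 : (2:ℝ) ^ (γ * T ^ m) ≤ ((ρ.den:ℝ) * M ^ m * 2 ^ (β * T ^ m)) *
        2 ^ (β * T ^ m) * M := by
      refine le_trans hlow ?_
      apply mul_le_mul_of_nonneg_right _ hMnn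
      exact mul_le_mul_of_nonneg_right hqb (by positivity)
    have hsplit : (2:ℝ) ^ (γ * T ^ m) =
        2 ^ ((γ - 2*β) * T ^ m) * (2 ^ (β * T ^ m) * 2 ^ (β * T ^ m)) := by
      rw [← pow_add, ← pow_add]
      congr 1
      have : γ - 2*β + (β + β) = γ := by omega
      calc γ * T ^ m = (γ - 2*β + (β + β)) * T ^ m := by rw [this]
      _ = (γ - 2*β) * T ^ m + (β * T ^ m + β * T ^ m) := by ring
    rw [hsplit] at h1
    have h2pow : (0:ℝ) < 2 ^ (β * T ^ m) * 2 ^ (β * T ^ m) := by positivity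
    have h2 : (2:ℝ) ^ ((γ - 2*β) * T ^ m) ≤ (ρ.den:ℝ) * M ^ (m+1) := by
      have h3 : ((ρ.den:ℝ) * M ^ m * 2 ^ (β * T ^ m)) * 2 ^ (β * T ^ m) * M
          = ((ρ.den:ℝ) * M ^ (m+1)) * (2 ^ (β * T ^ m) * 2 ^ (β * T ^ m)) := by ring
      rw [h3] at h1
      exact le_of_mul_le_mul_right (by linarith [h1]) h2pow
    refine le_trans ?_ h2
    have he2 : 2 ≤ γ - 2*β := by omega
    have hTm : 2 ^ m ≤ T ^ m := Nat.pow_le_pow_left hT2 m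
    have hexp : 2 * 2 ^ m ≤ (γ - 2*β) * T ^ m := by
      calc 2 * 2 ^ m ≤ (γ - 2*β) * 2 ^ m := Nat.mul_le_mul_right _ he2
      _ ≤ (γ - 2*β) * T ^ m := Nat.mul_le_mul_left _ hTm
    have h4eq : (4:ℝ) ^ (2 ^ m) = 2 ^ (2 * 2 ^ m) := by
      rw [pow_mul]; norm_num
    rw [h4eq]
    exact pow_le_pow_right₀ (by norm_num) hexp
  -- final contradiction
  obtain ⟨c, hc⟩ := exists_nat_ge ((ρ.den:ℝ) * M)
  have hdenM : (1:ℝ) ≤ (ρ.den:ℝ) * M := by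
    have h1 : (1:ℝ) ≤ (ρ.den:ℝ) := by exact_mod_cast hden_pos
    nlinarith
  have hc4 : (c:ℝ) ≤ (4:ℝ) ^ c := by
    have h1 : c < 2 ^ c := Nat.lt_two_pow_self
    have h2 : (2:ℕ) ^ c ≤ 4 ^ c := Nat.pow_le_pow_left (by norm_num) c
    have : (c:ℝ) ≤ ((4:ℕ) ^ c : ℕ) := by exact_mod_cast (by omega : c ≤ 4 ^ c)
    exact_mod_cast this
  have hfin : ∀ m, (4:ℝ) ^ (2 ^ m) ≤ (4:ℝ) ^ (c * (m+1)) := by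
    intro m
    have h0 : (0:ℝ) ≤ (ρ.den:ℝ) * M := by linarith
    have h1 : (ρ.den:ℝ) * M ^ (m+1) ≤ ((ρ.den:ℝ) * M) ^ (m+1) := by
      have hd1 : (1:ℝ) ≤ (ρ.den:ℝ) := by exact_mod_cast hden_pos
      have hsp : (ρ.den:ℝ) ≤ (ρ.den:ℝ) ^ (m+1) := le_self_pow₀ (by linarith) (by omega)
      have hstep : (ρ.den:ℝ) * M ^ (m+1) ≤ (ρ.den:ℝ) ^ (m+1) * M ^ (m+1) :=
        mul_le_mul_of_nonneg_right hsp (by positivity)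
      rw [mul_pow]
      exact hstep
    have h2 : ((ρ.den:ℝ) * M) ^ (m+1) ≤ (c:ℝ) ^ (m+1) :=
      pow_le_pow_left₀ h0 hc (m+1)
    have h3 : (c:ℝ) ^ (m+1) ≤ ((4:ℝ) ^ c) ^ (m+1) :=
      pow_le_pow_left₀ (by positivity) hc4 (m+1)
    calc (4:ℝ) ^ (2 ^ m) ≤ (ρ.den:ℝ) * M ^ (m+1) := lower m
    _ ≤ (c:ℝ) ^ (m+1) := le_trans h1 h2
    _ ≤ ((4:ℝ) ^ c) ^ (m+1) := h3
    _ = (4:ℝ) ^ (c * (m+1)) := by rw [← pow_mul]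
  have hcontra := hfin (2*c + 2)
  have hlt : c * (2*c + 2 + 1) < 2 ^ (2*c + 2) := nat_pow_helper c
  have : (4:ℝ) ^ (c * (2*c+2+1)) < (4:ℝ) ^ (2 ^ (2*c+2)) :=
    pow_lt_pow_right₀ (by norm_num) hlt
  linarith
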